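/- The online pass@k algorithm—which at each round greedily outputs k labels covering maximal uncovered weight, zeroes weights of hypotheses inconsistent with the demonstration y_t, and multiplies by (k+1) the weights of hypotheses containing y_t but none of the k outputs—makes at most log_{k+1}|S| mistakes (rounds where none of the k outputs lies in σ*(x_t)) on any sequence realizable by some σ* ∈ S. -/
import Mathlib

open Finset

lemma aux_step {H : Type*} [Fintype H] [DecidableEq H] {k : ℕ}
    (w : H → ℝ) (hw : ∀ h, 0 ≤ w h) (A : Finset H) (S : Fin k → Finset H)
    (hg : (∃ i, A = S i) ∨
      ∀ i : Fin k,
        ∑ h ∈ A \ (Finset.univ.filter (fun j : Fin k => j < i)).biUnion S, w h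
          ≤ ∑ h ∈ S i \ (Finset.univ.filter (fun j : Fin k => j < i)).biUnion S, w h) :
    ∑ h ∈ A ∩ Finset.univ.biUnion S, w h
      + (k + 1 : ℝ) * ∑ h ∈ A \ Finset.univ.biUnion S, w h ≤ ∑ h, w h := by
  set U := Finset.univ.biUnion S with hU
  have hsub : ∀ (s t : Finset H), s ⊆ t → ∑ h ∈ s, w h ≤ ∑ h ∈ t, w h :=
    fun s t hst => Finset.sum_le_sum_of_subset_of_nonneg hst (fun h _ _ => hw h)
  rcases hg with ⟨i, rfl⟩ | hg
  · have hSU : S i ⊆ U := Finset.subset_biUnion_of_mem S (Finset.mem_univ i)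
    have : S i \ U = ∅ := Finset.sdiff_eq_empty_iff_subset.mpr hSU
    rw [this]
    simp only [Finset.sum_empty, mul_zero, add_zero]
    exact hsub _ _ (Finset.inter_subset_left.trans (Finset.subset_univ _))
  · set Ult : Fin k → Finset H := fun i => (Finset.univ.filter (fun j : Fin k => j < i)).biUnion S with hUlt
    set D : Fin k → Finset H := fun i => (S i \ Ult i) \ A with hD
    have key : ∀ i : Fin k, ∑ h ∈ A \ U, w h ≤ ∑ h ∈ D i, w h := by
      intro i
      have h1 : ∑ h ∈ A \ U, w h + ∑ h ∈ (S i \ Ult i) ∩ A, w h ≤ ∑ h ∈ A \ Ult i, w h := by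
        rw [← Finset.sum_union]
        · apply hsub
          intro h hh
          rcases Finset.mem_union.mp hh with h' | h'
          · rw [Finset.mem_sdiff] at h' ⊢
            refine ⟨h'.1, fun hc => h'.2 ?_⟩
            exact Finset.biUnion_subset_biUnion_of_subset_left S (Finset.subset_univ _) hc
          · rw [Finset.mem_inter, Finset.mem_sdiff] at h'
            exact Finset.mem_sdiff.mpr ⟨h'.2, h'.1.2⟩
        · rw [Finset.disjoint_left]
          intro h hh hh'
          rw [Finset.mem_sdiff] at hh
          rw [Finset.mem_inter, Finset.mem_sdiff] at hh'
          exact hh.2 (Finset.mem_biUnion.mpr ⟨i, Finset.mem_univ i, hh'.1.1⟩)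
      have h2 : ∑ h ∈ A \ Ult i, w h ≤ ∑ h ∈ S i \ Ult i, w h := hg i
      have h3 : ∑ h ∈ S i \ Ult i, w h = ∑ h ∈ D i, w h + ∑ h ∈ (S i \ Ult i) ∩ A, w h := by
        rw [hD, add_comm]
        exact (Finset.sum_inter_add_sum_sdiff (S i \ Ult i) A w).symm
      linarith
    have hdisj : ∀ i j : Fin k, i ≠ j → Disjoint (D i) (D j) := by
      intro i j hij
      rcases lt_or_gt_of_ne hij with hlt | hlt
      · rw [Finset.disjoint_left]
        intro h hh hh'
        rw [hD] at hh hh'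
        simp only [Finset.mem_sdiff] at hh hh'
        exact hh'.1.2 (Finset.mem_biUnion.mpr ⟨i, Finset.mem_filter.mpr ⟨Finset.mem_univ i, hlt⟩, hh.1.1⟩)
      · rw [Finset.disjoint_right]
        intro h hh hh'
        rw [hD] at hh hh'
        simp only [Finset.mem_sdiff] at hh hh'
        exact hh'.1.2 (Finset.mem_biUnion.mpr ⟨j, Finset.mem_filter.mpr ⟨Finset.mem_univ j, hlt⟩, hh.1.1⟩)
    have hksum : (k : ℝ) * ∑ h ∈ A \ U, w h ≤ ∑ h ∈ U \ A, w h := by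
      calc (k : ℝ) * ∑ h ∈ A \ U, w h = ∑ _i : Fin k, ∑ h ∈ A \ U, w h := by
            rw [Finset.sum_const, Finset.card_univ, Fintype.card_fin, nsmul_eq_mul]
        _ ≤ ∑ i : Fin k, ∑ h ∈ D i, w h := Finset.sum_le_sum (fun i _ => key i)
        _ = ∑ h ∈ Finset.univ.biUnion D, w h := (Finset.sum_biUnion (fun i _ j _ hij => hdisj i j hij)).symm
        _ ≤ ∑ h ∈ U \ A, w h := by
            apply hsub
            intro h hh
            rcases Finset.mem_biUnion.mp hh with ⟨i, _, hi⟩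
            rw [hD] at hi
            simp only [Finset.mem_sdiff] at hi
            exact Finset.mem_sdiff.mpr ⟨Finset.mem_biUnion.mpr ⟨i, Finset.mem_univ i, hi.1.1⟩, hi.2⟩
    have hsplit : ∑ h ∈ A ∩ U, w h + ∑ h ∈ A \ U, w h + ∑ h ∈ U \ A, w h ≤ ∑ h, w h := by
      rw [Finset.sum_inter_add_sum_sdiff]
      rw [← Finset.sum_union (Finset.disjoint_sdiff)]
      exact hsub _ _ (Finset.subset_univ _)
    linarith

/-- Online pass@k mistake bound: the greedy weighted rule with (k+1)-fold reweighting
makes at most log_{k+1}|S| mistakes on any realizable sequence. -/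
theorem stmt14 {H X Y : Type*} [Fintype H] [Nonempty H] [DecidableEq H] [DecidableEq Y]
    (σ : H → X → Finset Y) (k : ℕ) (hk : 1 ≤ k)
    (x : ℕ → X) (y : ℕ → Y) (yhat : ℕ → Fin k → Y)
    (w : ℕ → H → ℝ) (hw1 : ∀ h, w 0 h = 1)
    (hgreedy : ∀ t, ∀ i : Fin k, ∀ z : Y, (∀ j : Fin k, j < i → yhat t j ≠ z) →
      ∑ h ∈ (Finset.univ.filter (fun h => z ∈ σ h (x t))) \
          (Finset.univ.filter (fun j : Fin k => j < i)).biUnion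
            (fun j => Finset.univ.filter (fun h => yhat t j ∈ σ h (x t))), w t h
        ≤ ∑ h ∈ (Finset.univ.filter (fun h => yhat t i ∈ σ h (x t))) \
            (Finset.univ.filter (fun j : Fin k => j < i)).biUnion
              (fun j => Finset.univ.filter (fun h => yhat t j ∈ σ h (x t))), w t h)
    (hupd : ∀ t h, w (t + 1) h =
      if y t ∉ σ h (x t) then 0
      else if ∃ i : Fin k, yhat t i ∈ σ h (x t) then w t h
      else (k + 1 : ℝ) * w t h)
    (hstar : H) (hreal : ∀ t, y t ∈ σ hstar (x t))
    (T : ℕ) :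
    (((Finset.range T).filter (fun t => ∀ i : Fin k, yhat t i ∉ σ hstar (x t))).card : ℝ)
      ≤ Real.logb (k + 1) (Fintype.card H) := by
  classical
  -- nonnegativity of weights
  have hwpos : ∀ t h, 0 ≤ w t h := by
    intro t
    induction t with
    | zero => intro h; rw [hw1]; norm_num
    | succ t ih =>
      intro h
      rw [hupd]
      split
      · exact le_refl 0
      · split
        · exact ih h
        · have : (0:ℝ) ≤ (k + 1 : ℝ) := by positivity
          exact mul_nonneg this (ih h)
  -- total weight is nonincreasing
  have hdec : ∀ t, ∑ h, w (t + 1) h ≤ ∑ h, w t h := by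
    intro t
    set A : Finset H := Finset.univ.filter (fun h => y t ∈ σ h (x t)) with hA
    set S : Fin k → Finset H :=
      fun i => Finset.univ.filter (fun h => yhat t i ∈ σ h (x t)) with hS
    set U : Finset H := Finset.univ.biUnion S with hU
    have hmemU : ∀ h : H, h ∈ U ↔ ∃ i : Fin k, yhat t i ∈ σ h (x t) := by
      intro h
      simp [hU, hS, Finset.mem_biUnion]
    have e0 : ∑ h, w (t + 1) h = ∑ h ∈ A, w (t + 1) h := by
      refine (Finset.sum_subset (Finset.subset_univ A) ?_).symm
      intro h _ hh
      rw [hupd]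
      have : y t ∉ σ h (x t) := by
        intro hc
        exact hh (Finset.mem_filter.mpr ⟨Finset.mem_univ h, hc⟩)
      simp [this]
    have e1 : ∑ h ∈ A ∩ U, w (t + 1) h = ∑ h ∈ A ∩ U, w t h := by
      refine Finset.sum_congr rfl (fun h hh => ?_)
      rw [Finset.mem_inter] at hh
      have h1 : y t ∈ σ h (x t) := (Finset.mem_filter.mp hh.1).2
      have h2 : ∃ i : Fin k, yhat t i ∈ σ h (x t) := (hmemU h).mp hh.2
      rw [hupd]
      simp [h1, h2]
    have e2 : ∑ h ∈ A \ U, w (t + 1) h = ∑ h ∈ A \ U, (k + 1 : ℝ) * w t h := by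
      refine Finset.sum_congr rfl (fun h hh => ?_)
      rw [Finset.mem_sdiff] at hh
      have h1 : y t ∈ σ h (x t) := (Finset.mem_filter.mp hh.1).2
      have h2 : ¬ ∃ i : Fin k, yhat t i ∈ σ h (x t) := fun hc => hh.2 ((hmemU h).mpr hc)
      rw [hupd]
      simp [h1, h2]
    have e3 : ∑ h, w (t + 1) h
        = ∑ h ∈ A ∩ U, w t h + (k + 1 : ℝ) * ∑ h ∈ A \ U, w t h := by
      rw [e0, ← Finset.sum_inter_add_sum_sdiff A U, e1, e2, Finset.mul_sum]
    rw [e3]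
    have hcast : ((k : ℝ) + 1) = ((k : ℝ) + 1) := rfl
    have := aux_step (w t) (hwpos t) A S ?_
    · exact_mod_cast this
    · by_cases hex : ∃ j : Fin k, yhat t j = y t
      · rcases hex with ⟨j, hj⟩
        left
        exact ⟨j, by rw [hA, hS, ← hj]⟩
      · right
        intro i
        push_neg at hex
        exact hgreedy t i (y t) (fun j _ => hex j)
  -- total weight at any time is at most |H|
  have htot : ∀ t, ∑ h, w t h ≤ (Fintype.card H : ℝ) := by
    intro t
    induction t with
    | zero => simp [hw1]
    | succ t ih => exact le_trans (hdec t) ih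
  -- weight of the realizable hypothesis
  have hws : ∀ t, w t hstar
      = ((k : ℝ) + 1) ^ (((Finset.range t).filter
          (fun s => ∀ i : Fin k, yhat s i ∉ σ hstar (x s))).card) := by
    intro t
    induction t with
    | zero => simp [hw1]
    | succ t ih =>
      rw [hupd]
      have h1 : ¬ (y t ∉ σ hstar (x t)) := not_not_intro (hreal t)
      rw [if_neg h1, Finset.range_add_one, Finset.filter_insert]
      by_cases h2 : ∃ i : Fin k, yhat t i ∈ σ hstar (x t)
      · have h3 : ¬ (∀ i : Fin k, yhat t i ∉ σ hstar (x t)) := by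
          push_neg
          rcases h2 with ⟨i, hi⟩
          exact ⟨i, hi⟩
        rw [if_pos h2, if_neg h3, ih]
      · have h3 : ∀ i : Fin k, yhat t i ∉ σ hstar (x t) := by
          push_neg at h2
          exact h2
        rw [if_neg h2, if_pos h3, Finset.card_insert_of_notMem (by simp), ih, pow_succ]
        ring
  -- conclude
  set M : ℕ := ((Finset.range T).filter
      (fun t => ∀ i : Fin k, yhat t i ∉ σ hstar (x t))).card with hM
  have hb : (1 : ℝ) < (k : ℝ) + 1 := by
    have : (1 : ℝ) ≤ (k : ℝ) := by exact_mod_cast hk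
    linarith
  have hpow : ((k : ℝ) + 1) ^ M ≤ (Fintype.card H : ℝ) := by
    have h1 : w T hstar ≤ ∑ h, w T h :=
      Finset.single_le_sum (fun h _ => hwpos T h) (Finset.mem_univ hstar)
    rw [hws T] at h1
    exact le_trans h1 (htot T)
  have hlogb : Real.logb ((k : ℝ) + 1) (((k : ℝ) + 1) ^ M)
      ≤ Real.logb ((k : ℝ) + 1) (Fintype.card H) :=
    Real.logb_le_logb_of_le hb (by positivity) hpow
  rw [Real.logb_pow, Real.logb_self_eq_one hb] at hlogb
  simpa using hlogb
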